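/- arXiv:1412.7670 — 4 statements merged into one kernel-verified Lean document; each statement's English description precedes it below -/
import Mathlib

section
/- Let ε ∈ (0,1/2), K ≥ 1, and n, k ∈ ℕ. If the weighted diamond W_n admits a K-embedding into some k-dimensional real Banach space (in particular into the k-dimensional Euclidean space ℓ₂^k), then 2^n ≤ (2K+1)^k; consequently, if the distortions of embeddings of W_n into ℓ₂^{k(n)} are uniformly bounded, then k(n) ≥ c·n for some constant c > 0. -/
noncomputable section

open scoped ENNReal Classical

namespace Stmt

/-- Vertex set together with the (oriented) edge relation of the diamond graph `D n`. -/
def VE : ℕ → (V : Type) × (V → V → Prop)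
  | 0 => ⟨Fin 2, fun u v => u = 0 ∧ v = 1⟩
  | n + 1 =>
      ⟨(VE n).1 ⊕ ({e : (VE n).1 × (VE n).1 // (VE n).2 e.1 e.2} × Bool),
        fun u v =>
          ∃ (e : {e : (VE n).1 × (VE n).1 // (VE n).2 e.1 e.2}) (b : Bool),
            (u = Sum.inl e.1.1 ∧ v = Sum.inr (e, b)) ∨
            (u = Sum.inr (e, b) ∧ v = Sum.inl e.1.2)⟩

/-- Vertices of the diamond graph `D n` (equivalently, of the weighted diamond `W n`). -/
def Vert (n : ℕ) : Type := (VE n).1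

/-- The (oriented) edge relation of the diamond graph `D n`. -/
def dEdge (n : ℕ) : Vert n → Vert n → Prop := (VE n).2

/-- The edges of generation `k` inside the vertex set of `D n`: the edges of `D k`,
transported to `Vert n` via the canonical inclusions.  These are the edges of the
weighted diamond `W n`, which get weight `(1/2 + ε) ^ k`. -/
def edgeAt : (n : ℕ) → (k : ℕ) → Vert n → Vert n → Prop
  | 0, k => fun u v => k = 0 ∧ dEdge 0 u v
  | n + 1, k => fun u v =>
      (k = n + 1 ∧ dEdge (n + 1) u v) ∨
      (∃ u' v' : Vert n, u = Sum.inl u' ∧ v = Sum.inl v' ∧ edgeAt n k u' v')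

/-- Edge weights of the weighted diamond `W n`:  the value is `(1/2 + ε) ^ k` if `{u, v}`
is an edge of generation `k`, and `∞` if `{u, v}` is not an edge of `W n`. -/
def wCost (ε : ℝ) (n : ℕ) (u v : Vert n) : ℝ≥0∞ :=
  ⨅ (k : ℕ) (_ : edgeAt n k u v ∨ edgeAt n k v u), ENNReal.ofReal ((1 / 2 + ε) ^ k)

/-- Total weight of a walk, recorded as the list of visited vertices. -/
def walkCost {V : Type*} (c : V → V → ℝ≥0∞) : List V → ℝ≥0∞
  | [] => 0
  | [_] => 0
  | u :: v :: l => c u v + walkCost c (v :: l)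

/-- The shortest-path (extended) distance associated to an edge-weight function `c`. -/
def spDist {V : Type*} (c : V → V → ℝ≥0∞) (u v : V) : ℝ≥0∞ :=
  ⨅ p : { l : List V // l.head? = some u ∧ l.getLast? = some v }, walkCost c p.1

/-- The shortest-path metric `d_{W_n}` of the weighted diamond `W n` (with parameter `ε`). -/
def dW (ε : ℝ) (n : ℕ) (u v : Vert n) : ℝ :=
  (spDist (wCost ε n) u v).toReal

/-- `embedsM K dV dY` : there is a map of distortion at most `K` from the space with distance
function `dV` to the space with distance function `dY`. -/
def embedsM {V Y : Type*} (K : ℝ) (dV : V → V → ℝ) (dY : Y → Y → ℝ) : Prop :=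
  ∃ f : V → Y, Function.Injective f ∧ ∃ r : ℝ, 0 < r ∧
    ∀ a b, r * dV a b ≤ dY (f a) (f b) ∧ dY (f a) (f b) ≤ K * (r * dV a b)



/-- Base vertex. -/
def bas : (n : ℕ) → Vert n
  | 0 => (0 : Fin 2)
  | n + 1 => Sum.inl (bas n)

/-- Index type of cardinality `2^n`. -/
def Idx : ℕ → Type
  | 0 => PUnit
  | n + 1 => Idx n × Bool

instance instFintypeIdx : (n : ℕ) → Fintype (Idx n)
  | 0 => inferInstanceAs (Fintype PUnit)
  | n + 1 => letI := instFintypeIdx n; inferInstanceAs (Fintype (Idx n × Bool))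

lemma card_Idx : ∀ n, Fintype.card (Idx n) = 2 ^ n
  | 0 => rfl
  | n + 1 => by
      show Fintype.card (Idx n × Bool) = 2 ^ (n + 1)
      rw [Fintype.card_prod, card_Idx n, Fintype.card_bool]
      ring

instance instDecEqVert : (n : ℕ) → DecidableEq (Vert n)
  | 0 => inferInstanceAs (DecidableEq (Fin 2))
  | n + 1 =>
      letI := instDecEqVert n
      inferInstanceAs (DecidableEq (Vert n ⊕ ({e : Vert n × Vert n // dEdge n e.1 e.2} × Bool)))

/-- The family of `2^n` edges of `D n` incident to the base vertex. -/
def inc : (n : ℕ) → Idx n → {e : Vert n × Vert n // dEdge n e.1 e.2 ∧ (e.1 = bas n ∨ e.2 = bas n)}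
  | 0, _ => ⟨((0 : Fin 2), (1 : Fin 2)), ⟨rfl, rfl⟩, Or.inl rfl⟩
  | n + 1, (i, b) =>
      if h : (inc n i).1.1 = bas n then
        ⟨(Sum.inl (bas n), Sum.inr (⟨(inc n i).1, (inc n i).2.1⟩, b)),
          ⟨⟨(inc n i).1, (inc n i).2.1⟩, b, Or.inl ⟨congrArg Sum.inl h.symm, rfl⟩⟩, Or.inl rfl⟩
      else
        ⟨(Sum.inr (⟨(inc n i).1, (inc n i).2.1⟩, b), Sum.inl (bas n)),
          ⟨⟨(inc n i).1, (inc n i).2.1⟩, b,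
            Or.inr ⟨rfl, congrArg Sum.inl ((inc n i).2.2.resolve_left h).symm⟩⟩, Or.inr rfl⟩

lemma dEdge_succ_iff {n : ℕ} {u v : Vert (n + 1)} :
    dEdge (n + 1) u v ↔
      ∃ (e : {e : Vert n × Vert n // dEdge n e.1 e.2}) (b : Bool),
        (u = Sum.inl e.1.1 ∧ v = Sum.inr (e, b)) ∨
        (u = Sum.inr (e, b) ∧ v = Sum.inl e.1.2) := Iff.rfl

lemma edgeAt_succ_iff {n k : ℕ} {u v : Vert (n + 1)} :
    edgeAt (n + 1) k u v ↔
      (k = n + 1 ∧ dEdge (n + 1) u v) ∨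
      (∃ u' v' : Vert n, u = Sum.inl u' ∧ v = Sum.inl v' ∧ edgeAt n k u' v') := Iff.rfl

lemma edgeAt_zero_iff {k : ℕ} {u v : Vert 0} :
    edgeAt 0 k u v ↔ (k = 0 ∧ dEdge 0 u v) := Iff.rfl

lemma edgeAt_le : ∀ {n k : ℕ} {u v : Vert n}, edgeAt n k u v → k ≤ n
  | 0, k, u, v, h => (edgeAt_zero_iff.mp h).1.le
  | n + 1, k, u, v, h => by
      rcases edgeAt_succ_iff.mp h with ⟨hk, _⟩ | ⟨u', v', _, _, h'⟩
      · exact hk.le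
      · exact (edgeAt_le h').trans (Nat.le_succ n)

lemma not_edgeAt_inr_inr {n k : ℕ} (a b : {e : Vert n × Vert n // dEdge n e.1 e.2} × Bool) :
    ¬ edgeAt (n + 1) k (Sum.inr a) (Sum.inr b) := by
  intro h
  rcases edgeAt_succ_iff.mp h with ⟨_, hd⟩ | ⟨u', v', h1, _, _⟩
  · rcases dEdge_succ_iff.mp hd with ⟨e, bb, ⟨h1, _⟩ | ⟨_, h2⟩⟩
    · exact absurd h1 (by simp)
    · exact absurd h2 (by simp)
  · exact absurd h1 (by simp)

/-- The `2^(n+1)` midpoint vertices of generation `n+1` adjacent to the base vertex. -/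
def pt (n : ℕ) (ib : Idx n × Bool) : Vert (n + 1) :=
  Sum.inr ((⟨(inc n ib.1).1, (inc n ib.1).2.1⟩ : {e : Vert n × Vert n // dEdge n e.1 e.2}), ib.2)

lemma pt_adj (n : ℕ) (ib : Idx n × Bool) :
    edgeAt (n + 1) (n + 1) (bas (n + 1)) (pt n ib) ∨
    edgeAt (n + 1) (n + 1) (pt n ib) (bas (n + 1)) := by
  by_cases h : (inc n ib.1).1.1 = bas n
  · left
    refine edgeAt_succ_iff.mpr (Or.inl ⟨rfl, dEdge_succ_iff.mpr
      ⟨⟨(inc n ib.1).1, (inc n ib.1).2.1⟩, ib.2, Or.inl ⟨congrArg Sum.inl h.symm, rfl⟩⟩⟩)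
  · right
    have h2 : (inc n ib.1).1.2 = bas n := (inc n ib.1).2.2.resolve_left h
    refine edgeAt_succ_iff.mpr (Or.inl ⟨rfl, dEdge_succ_iff.mpr
      ⟨⟨(inc n ib.1).1, (inc n ib.1).2.1⟩, ib.2, Or.inr ⟨rfl, congrArg Sum.inl h2.symm⟩⟩⟩)

lemma inc_inj : ∀ n, Function.Injective (fun i : Idx n => (inc n i).1)
  | 0 => fun i j _ => Subsingleton.elim (α := PUnit) i j
  | n + 1 => by
      rintro ⟨i1, b1⟩ ⟨j1, b2⟩ h
      simp only [inc] at h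
      split_ifs at h with h1 h2 h2 <;> replace h := Prod.mk.inj h
      · obtain ⟨-, h⟩ := h
        have h' := Sum.inr.inj h
        obtain ⟨he, hb⟩ := Prod.mk.injEq .. ▸ h'
        have he' : (inc n i1).1 = (inc n j1).1 := congrArg (fun x : {e : Vert n × Vert n // dEdge n e.1 e.2} => x.1) he
        have : i1 = j1 := inc_inj n he'
        simp_all
        rfl
      · exact absurd h.1 (by simp)
      · exact absurd h.1 (by simp)
      · obtain ⟨h, -⟩ := h
        have h' := Sum.inr.inj h
        obtain ⟨he, hb⟩ := Prod.mk.injEq .. ▸ h'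
        have he' : (inc n i1).1 = (inc n j1).1 := congrArg (fun x : {e : Vert n × Vert n // dEdge n e.1 e.2} => x.1) he
        have : i1 = j1 := inc_inj n he'
        simp_all
        rfl

lemma pt_inj (n : ℕ) : Function.Injective (pt n) := by
  rintro ⟨i, b⟩ ⟨j, c⟩ h
  have h' := Sum.inr.inj h
  obtain ⟨he, hb⟩ := Prod.mk.injEq .. ▸ h'
  have he' : (inc n i).1 = (inc n j).1 := congrArg (fun x : {e : Vert n × Vert n // dEdge n e.1 e.2} => x.1) he
  have : i = j := inc_inj n he'
  simp_all

lemma wCost_ge (ε : ℝ) (hε0 : 0 < ε) (hε : ε < 1 / 2) (n : ℕ) (u v : Vert n) :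
    ENNReal.ofReal ((1 / 2 + ε) ^ n) ≤ wCost ε n u v := by
  refine le_iInf fun k => le_iInf fun h => ?_
  have hk : k ≤ n := by rcases h with h | h; exacts [edgeAt_le h, edgeAt_le h]
  exact ENNReal.ofReal_le_ofReal (pow_le_pow_of_le_one (by linarith) (by linarith) hk)

lemma wCost_le (ε : ℝ) (n : ℕ) {u v : Vert n}
    (h : edgeAt n n u v ∨ edgeAt n n v u) :
    wCost ε n u v ≤ ENNReal.ofReal ((1 / 2 + ε) ^ n) :=
  iInf₂_le n h

lemma wCost_inr (ε : ℝ) (n : ℕ) (a b : {e : Vert n × Vert n // dEdge n e.1 e.2} × Bool) :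
    wCost ε (n + 1) (Sum.inr a) (Sum.inr b) = ⊤ := by
  refine le_antisymm le_top (le_iInf fun k => le_iInf fun h => ?_)
  exact (h.elim (not_edgeAt_inr_inr _ _) (not_edgeAt_inr_inr _ _)).elim

lemma walkCost_ge_of_two {V : Type*} (c : V → V → ℝ≥0∞) (w : ℝ≥0∞)
    (hc : ∀ u v, w ≤ c u v) : ∀ l : List V, 2 ≤ l.length → w ≤ walkCost c l
  | a :: b :: t, _ => by
      show w ≤ c a b + walkCost c (b :: t)
      exact le_add_right (hc a b)

lemma walkCost_ge_two {V : Type*} (c : V → V → ℝ≥0∞) (w : ℝ≥0∞)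
    (hc : ∀ u v, w ≤ c u v) {x y : V} (hxy : c x y = ⊤) (hne : x ≠ y) :
    ∀ l : List V, l.head? = some x → l.getLast? = some y → w + w ≤ walkCost c l
  | [], h1, h2 => by simp at h1
  | [a], h1, h2 => by
      simp at h1 h2
      exact absurd (h1.symm.trans h2) hne
  | [a, b], h1, h2 => by
      have ha : a = x := by simpa using h1
      have hb : b = y := by simpa using h2
      show w + w ≤ c a b + walkCost c [b]
      rw [ha, hb, hxy]
      simp
  | a :: b :: d :: t, h1, h2 => by
      show w + w ≤ c a b + walkCost c (b :: d :: t)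
      exact add_le_add (hc a b) (walkCost_ge_of_two c w hc _ (by simp))

lemma dW_pt (ε : ℝ) (hε0 : 0 < ε) (hε : ε < 1 / 2) (n : ℕ) {ib jc : Idx n × Bool} (hne : ib ≠ jc) :
    dW ε (n + 1) (pt n ib) (pt n jc) = 2 * (1 / 2 + ε) ^ (n + 1) := by
  set w := ENNReal.ofReal ((1 / 2 + ε) ^ (n + 1)) with hw
  have hwpos : (0 : ℝ) < (1 / 2 + ε) ^ (n + 1) := pow_pos (by linarith) _
  have upper : spDist (wCost ε (n + 1)) (pt n ib) (pt n jc) ≤ w + w := by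
    refine (iInf_le _ ⟨[pt n ib, bas (n + 1), pt n jc], by simp, by simp⟩).trans ?_
    show wCost ε (n + 1) (pt n ib) (bas (n + 1)) +
        (wCost ε (n + 1) (bas (n + 1)) (pt n jc) + 0) ≤ w + w
    rw [add_zero]
    exact add_le_add (wCost_le ε (n + 1) (pt_adj n ib).symm) (wCost_le ε (n + 1) (pt_adj n jc))
  have lower : w + w ≤ spDist (wCost ε (n + 1)) (pt n ib) (pt n jc) := by
    refine le_iInf fun p => ?_
    exact walkCost_ge_two _ w (wCost_ge ε hε0 hε (n + 1)) (wCost_inr ε n _ _)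
      (fun h => hne (pt_inj n h)) p.1 p.2.1 p.2.2
  have heq : spDist (wCost ε (n + 1)) (pt n ib) (pt n jc) = w + w := le_antisymm upper lower
  rw [dW, heq, hw, ← ENNReal.ofReal_add hwpos.le hwpos.le, ENNReal.toReal_ofReal (by linarith)]
  ring

open MeasureTheory Metric in
lemma packing {X : Type u} [NormedAddCommGroup X] [NormedSpace ℝ X] [FiniteDimensional ℝ X]
    {ι : Type} [Fintype ι] (q : ι → X) {s R : ℝ} (hs : 0 < s) (hR : 0 ≤ R)
    (h1 : ∀ i j, i ≠ j → s ≤ dist (q i) (q j)) (h2 : ∀ i j, dist (q i) (q j) ≤ R) :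
    (Fintype.card ι : ℝ) ≤ (2 * R / s + 1) ^ (Module.finrank ℝ X) := by
  have hbase : (1 : ℝ) ≤ 2 * R / s + 1 := by
    have : 0 ≤ 2 * R / s := by positivity
    linarith
  rcases subsingleton_or_nontrivial X with hX | hX
  · have hcard : Fintype.card ι ≤ 1 := by
      refine Fintype.card_le_one_iff.mpr fun i j => ?_
      by_contra hij
      have := h1 i j hij
      have : dist (q i) (q j) = 0 := by
        rw [Subsingleton.elim (q i) (q j)]; simp
      linarith
    calc (Fintype.card ι : ℝ) ≤ 1 := by exact_mod_cast hcard
      _ ≤ _ := one_le_pow₀ hbase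
  rcases isEmpty_or_nonempty ι with hι | ⟨⟨i₀⟩⟩
  · rw [Fintype.card_eq_zero]
    simp only [Nat.cast_zero]
    exact le_trans zero_le_one (one_le_pow₀ hbase)
  borelize X
  set k := Module.finrank ℝ X with hk
  set μ : Measure X := Measure.addHaar with hμ
  have hdisj : Set.PairwiseDisjoint (Finset.univ : Finset ι)
      (fun i => ball (q i) (s / 2)) := by
    intro i _ j _ hij
    exact ball_disjoint_ball (by have := h1 i j hij; linarith)
  have hsub : ∀ i, ball (q i) (s / 2) ⊆ ball (q i₀) (R + s / 2) := fun i =>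
    ball_subset_ball' (by have := h2 i i₀; linarith)
  have hmeas : μ (⋃ i ∈ (Finset.univ : Finset ι), ball (q i) (s / 2))
      = ∑ i, μ (ball (q i) (s / 2)) :=
    measure_biUnion_finset hdisj (fun i _ => measurableSet_ball)
  have hle : ∑ i, μ (ball (q i) (s / 2)) ≤ μ (ball (q i₀) (R + s / 2)) := by
    rw [← hmeas]
    exact measure_mono (Set.iUnion₂_subset fun i _ => hsub i)
  rw [Measure.addHaar_ball μ _ (by linarith : (0:ℝ) ≤ R + s / 2)] at hle
  simp only [Measure.addHaar_ball μ _ (by linarith : (0:ℝ) ≤ s / 2)] at hle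
  rw [Finset.sum_const, Finset.card_univ, nsmul_eq_mul, ← mul_assoc] at hle
  have hB0 : μ (ball (0 : X) 1) ≠ 0 := (measure_ball_pos μ 0 one_pos).ne'
  have hBt : μ (ball (0 : X) 1) ≠ ⊤ := measure_ball_lt_top.ne
  have h3 := (ENNReal.mul_le_mul_iff_left hB0 hBt).mp hle
  rw [← ENNReal.ofReal_natCast, ← ENNReal.ofReal_mul (Nat.cast_nonneg _)] at h3
  have hreal : (Fintype.card ι : ℝ) * (s / 2) ^ k ≤ (R + s / 2) ^ k :=
    (ENNReal.ofReal_le_ofReal_iff (by positivity)).mp h3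
  have hpow : (0 : ℝ) < (s / 2) ^ k := by positivity
  calc (Fintype.card ι : ℝ) ≤ (R + s / 2) ^ k / (s / 2) ^ k := by
        rwa [le_div_iff₀ hpow]
    _ = ((R + s / 2) / (s / 2)) ^ k := (div_pow _ _ _).symm
    _ = (2 * R / s + 1) ^ k := by
        have hhalf : (R + s / 2) / (s / 2) = 2 * R / s + 1 := by
          field_simp
        rw [hhalf]

universe v

lemma part1 (ε : ℝ) (hε0 : 0 < ε) (hε : ε < 1 / 2) (K : ℝ) (hK : 1 ≤ K) (n k : ℕ)
    (X : Type v) [NormedAddCommGroup X] [NormedSpace ℝ X] [FiniteDimensional ℝ X]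
    (hdim : Module.finrank ℝ X = k)
    (hemb : embedsM K (dW ε n) (fun a b : X => ‖a - b‖)) :
    (2 : ℝ) ^ n ≤ (2 * K + 1) ^ k := by
  obtain ⟨f, hinj, r, hr, hb⟩ := hemb
  have hKpos : (0 : ℝ) < K := lt_of_lt_of_le one_pos hK
  cases n with
  | zero => simpa using one_le_pow₀ (by linarith : (1 : ℝ) ≤ 2 * K + 1)
  | succ m =>
    set δ := 2 * (1 / 2 + ε) ^ (m + 1) with hδ
    have hδpos : 0 < δ := by positivity
    set q : Idx m × Bool → X := fun ib => f (pt m ib) with hq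
    have h1 : ∀ i j, i ≠ j → r * δ ≤ dist (q i) (q j) := by
      intro i j hij
      have h := (hb (pt m i) (pt m j)).1
      rw [dW_pt ε hε0 hε m hij] at h
      rw [dist_eq_norm]
      exact h
    have h2 : ∀ i j, dist (q i) (q j) ≤ K * (r * δ) := by
      intro i j
      by_cases hij : i = j
      · subst hij
        simp only [dist_self]
        positivity
      · have h := (hb (pt m i) (pt m j)).2
        rw [dW_pt ε hε0 hε m hij] at h
        rw [dist_eq_norm]
        exact h
    have hp := packing q (by positivity : (0:ℝ) < r * δ)
      (by positivity : (0:ℝ) ≤ K * (r * δ)) h1 h2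
    rw [hdim] at hp
    have hcard : (Fintype.card (Idx m × Bool) : ℝ) = 2 ^ (m + 1) := by
      rw [Fintype.card_prod, card_Idx, Fintype.card_bool]
      push_cast
      ring
    rw [hcard] at hp
    have hval : 2 * (K * (r * δ)) / (r * δ) + 1 = 2 * K + 1 := by
      field_simp
    rwa [hval] at hp

universe u

/-- If the weighted diamond `W n` admits a `K`-embedding into a
`k`-dimensional real Banach space, then `2^n ≤ (2K+1)^k`.  Consequently, if the distortions
of embeddings of `W n` into `ℓ₂^{k n}` are uniformly bounded, then `k n ≥ c * n` for some
constant `c > 0`. -/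
theorem statement11 (ε : ℝ) (hε0 : 0 < ε) (hε : ε < 1 / 2) :
    (∀ K : ℝ, 1 ≤ K → ∀ n k : ℕ,
      ∀ (X : Type u) [NormedAddCommGroup X] [NormedSpace ℝ X] [FiniteDimensional ℝ X],
        Module.finrank ℝ X = k →
        embedsM K (dW ε n) (fun a b : X => ‖a - b‖) →
        (2 : ℝ) ^ n ≤ (2 * K + 1) ^ k) ∧
    (∀ K : ℝ, 1 ≤ K → ∀ k : ℕ → ℕ,
      (∀ n : ℕ, embedsM K (dW ε n)
        (fun a b : EuclideanSpace ℝ (Fin (k n)) => ‖a - b‖)) →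
      ∃ c : ℝ, 0 < c ∧ ∀ n : ℕ, c * (n : ℝ) ≤ (k n : ℝ)) := by
  constructor
  · intro K hK n k X _ _ _ hdim hemb
    exact part1 ε hε0 hε K hK n k X hdim hemb
  · intro K hK k hemb
    have hK1 : (1 : ℝ) < 2 * K + 1 := by linarith
    have hlog2 : 0 < Real.log 2 := Real.log_pos one_lt_two
    have hlogK : 0 < Real.log (2 * K + 1) := Real.log_pos hK1
    refine ⟨Real.log 2 / Real.log (2 * K + 1), by positivity, fun n => ?_⟩
    have h2 : (2 : ℝ) ^ n ≤ (2 * K + 1) ^ (k n) :=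
      part1 ε hε0 hε K hK n (k n) (EuclideanSpace ℝ (Fin (k n)))
        finrank_euclideanSpace_fin (hemb n)
    have hlog : (n : ℝ) * Real.log 2 ≤ (k n : ℝ) * Real.log (2 * K + 1) := by
      have h3 := Real.log_le_log (by positivity) h2
      rwa [Real.log_pow, Real.log_pow] at h3
    rw [div_mul_eq_mul_div, div_le_iff₀ hlogK]
    linarith

end Stmt
end
end

section
/- Let ε ∈ (0,1/2) and n ∈ ℕ. Then every injective map from the weighted diamond W_n into an equilateral metric space has distortion at least (1/2+ε)^{−n}; consequently the spaces W_n cannot be embedded with uniformly bounded distortion into equilateral spaces. -/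
noncomputable section

open scoped ENNReal Classical

namespace Stmt

universe u

def phi : (n : ℕ) → Vert n → ℝ
  | 0 => fun v => ((v : Fin 2).val : ℝ)
  | n + 1 => fun v =>
      match v with
      | Sum.inl u => phi n u
      | Sum.inr (e, _) => (phi n e.1.1 + phi n e.1.2) / 2

theorem phi_dEdge : ∀ (n : ℕ) (u v : Vert n), dEdge n u v →
    phi n v = phi n u + (1/2 : ℝ) ^ n
  | 0, u, v, h => by
      obtain ⟨hu, hv⟩ := h; subst hu; subst hv
      show (((1 : Fin 2).val : ℝ)) = ((0 : Fin 2).val : ℝ) + (1/2:ℝ)^0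
      norm_num
  | n+1, u, v, h => by
      obtain ⟨e, b, ⟨hu, hv⟩ | ⟨hu, hv⟩⟩ := h <;> subst hu <;> subst hv <;>
      · have ih := phi_dEdge n e.1.1 e.1.2 e.2
        show _ = _
        simp only [phi, ih]
        ring

theorem phi_edge : ∀ (n k : ℕ) (u v : Vert n), edgeAt n k u v →
    phi n v = phi n u + (1/2 : ℝ) ^ k
  | 0, k, u, v, h => by
      obtain ⟨hk, h⟩ := h; subst hk; exact phi_dEdge 0 u v h
  | n+1, k, u, v, h => by
      rcases h with ⟨hk, h⟩ | ⟨u', v', hu, hv, h⟩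
      · subst hk; exact phi_dEdge (n+1) u v h
      · subst hu; subst hv
        have := phi_edge n k u' v' h
        simpa [phi] using this

def topEdge : (n : ℕ) → {p : Vert n × Vert n // dEdge n p.1 p.2 ∧ p.1 ≠ p.2}
  | 0 => ⟨((0 : Fin 2), (1 : Fin 2)), ⟨rfl, rfl⟩, fun h => Fin.zero_ne_one h⟩
  | n + 1 =>
      ⟨(Sum.inl (topEdge n).1.1, Sum.inr (⟨(topEdge n).1, (topEdge n).2.1⟩, true)),
        ⟨⟨(topEdge n).1, (topEdge n).2.1⟩, true, Or.inl ⟨rfl, rfl⟩⟩, by exact Sum.inl_ne_inr⟩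

theorem edge_top : ∀ n, edgeAt n n (topEdge n).1.1 (topEdge n).1.2
  | 0 => ⟨rfl, (topEdge 0).2.1⟩
  | n+1 => Or.inl ⟨rfl, (topEdge (n+1)).2.1⟩

def src : (n : ℕ) → Vert n
  | 0 => (0 : Fin 2)
  | n + 1 => Sum.inl (src n)

def tgt : (n : ℕ) → Vert n
  | 0 => (1 : Fin 2)
  | n + 1 => Sum.inl (tgt n)

theorem edge0 : ∀ n, edgeAt n 0 (src n) (tgt n)
  | 0 => ⟨rfl, rfl, rfl⟩
  | n+1 => Or.inr ⟨src n, tgt n, rfl, rfl, edge0 n⟩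

theorem phi_src : ∀ n, phi n (src n) = 0
  | 0 => by
      show ((0 : Fin 2).val : ℝ) = 0
      norm_num
  | n+1 => by simpa [phi, src] using phi_src n

theorem walk_lb {V : Type*} (c : V → V → ℝ≥0∞) (φ : V → ℝ)
    (hc : ∀ a b, ENNReal.ofReal |φ b - φ a| ≤ c a b) :
    ∀ (l : List V) (u v : V), l.head? = some u → l.getLast? = some v →
      ENNReal.ofReal |φ v - φ u| ≤ walkCost c l
  | [], u, v, h, _ => by simp at h
  | [x], u, v, hu, hv => by
      have hu' : x = u := by simpa using hu
      have hv' : x = v := by simpa using hv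
      subst hu'; subst hv'
      simp [walkCost]
  | x :: y :: l, u, v, hu, hv => by
      have hu' : x = u := by simpa using hu
      subst hu'
      have hlast : (y :: l).getLast? = some v := by
        rw [List.getLast?_cons_cons] at hv; exact hv
      have ih := walk_lb c φ hc (y :: l) y v rfl hlast
      calc ENNReal.ofReal |φ v - φ x|
          ≤ ENNReal.ofReal (|φ y - φ x| + |φ v - φ y|) := by
            apply ENNReal.ofReal_le_ofReal
            calc |φ v - φ x| = |(φ y - φ x) + (φ v - φ y)| := by ring_nf
              _ ≤ |φ y - φ x| + |φ v - φ y| := abs_add_le _ _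
        _ ≤ ENNReal.ofReal |φ y - φ x| + ENNReal.ofReal |φ v - φ y| :=
            ENNReal.ofReal_add_le
        _ ≤ c x y + walkCost c (y :: l) := add_le_add (hc x y) ih
        _ = walkCost c (x :: y :: l) := rfl
-- AUX END


theorem wCost_lb {ε : ℝ} (hε0 : 0 < ε) (n : ℕ) (u v : Vert n) :
    ENNReal.ofReal |phi n v - phi n u| ≤ wCost ε n u v := by
  refine le_iInf fun k => le_iInf fun h => ENNReal.ofReal_le_ofReal ?_
  have habs : |phi n v - phi n u| = (1/2 : ℝ) ^ k := by
    rcases h with h | h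
    · rw [phi_edge n k u v h]
      have : phi n u + (1/2:ℝ)^k - phi n u = (1/2:ℝ)^k := by ring
      rw [this, abs_of_nonneg (by positivity)]
    · rw [phi_edge n k v u h]
      have : phi n v - (phi n v + (1/2:ℝ)^k) = -((1/2:ℝ)^k) := by ring
      rw [this, abs_neg, abs_of_nonneg (by positivity)]
  rw [habs]
  exact pow_le_pow_left₀ (by norm_num) (by linarith) k

theorem spDist_le_cost {V : Type*} (c : V → V → ℝ≥0∞) (u v : V) :
    spDist c u v ≤ c u v := by
  have h : walkCost c [u, v] = c u v := by simp [walkCost]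
  exact iInf_le_of_le ⟨[u, v], by simp, by simp⟩ (le_of_eq h)

theorem spDist_lb {ε : ℝ} (hε0 : 0 < ε) (n : ℕ) (u v : Vert n) :
    ENNReal.ofReal |phi n v - phi n u| ≤ spDist (wCost ε n) u v :=
  le_iInf fun p => walk_lb _ _ (fun a b => wCost_lb hε0 n a b) p.1 u v p.2.1 p.2.2

/-- Every injective map from the weighted diamond `W n` into an
equilateral metric space has distortion at least `(1/2+ε)^{-n}`. -/
theorem statement12 (ε : ℝ) (hε0 : 0 < ε) (hε : ε < 1 / 2) (n : ℕ)
    (Y : Type u) [MetricSpace Y] (e : ℝ) (he : 0 < e)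
    (hequi : ∀ u v : Y, u ≠ v → dist u v = e)
    (f : Vert n → Y) (hf : Function.Injective f)
    (K r : ℝ) (hr : 0 < r)
    (hemb : ∀ a b : Vert n, r * dW ε n a b ≤ dist (f a) (f b) ∧
      dist (f a) (f b) ≤ K * (r * dW ε n a b)) :
    (1 / 2 + ε) ^ (-(n : ℤ)) ≤ K := by
  set x : ℝ := (1/2 + ε) ^ n with hxdef
  have hx : 0 < x := by positivity
  have hphit : phi n (tgt n) = 1 := by
    have := phi_edge n 0 (src n) (tgt n) (edge0 n)
    rw [this, phi_src]; norm_num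
  -- the distance from s to t is 1
  have h1 : ENNReal.ofReal 1 ≤ spDist (wCost ε n) (src n) (tgt n) := by
    have habs : |phi n (tgt n) - phi n (src n)| = 1 := by
      rw [hphit, phi_src]; norm_num
    rw [← habs]; exact spDist_lb hε0 n (src n) (tgt n)
  have h2 : spDist (wCost ε n) (src n) (tgt n) ≤ ENNReal.ofReal 1 := by
    refine le_trans (spDist_le_cost _ (src n) (tgt n)) (le_trans (iInf₂_le
      (f := fun (k : ℕ) (_ : edgeAt n k (src n) (tgt n) ∨ edgeAt n k (tgt n) (src n)) =>
      ENNReal.ofReal ((1 / 2 + ε) ^ k)) 0 (Or.inl (edge0 n))) ?_)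
    simp
  have hst : dW ε n (src n) (tgt n) = 1 := by
    rw [dW, le_antisymm h2 h1, ENNReal.toReal_ofReal zero_le_one]
  have hstne : src n ≠ tgt n := by
    intro hq
    rw [← hq, phi_src] at hphit
    norm_num at hphit
  -- the generation-n edge gives a pair at distance at most x
  obtain ⟨a, b, hab, hedge'⟩ : ∃ a b : Vert n, a ≠ b ∧ edgeAt n n a b :=
    ⟨(topEdge n).1.1, (topEdge n).1.2, (topEdge n).2.2, edge_top n⟩
  have h3 : dW ε n a b ≤ x := by
    refine ENNReal.toReal_le_of_le_ofReal hx.le ?_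
    refine le_trans (spDist_le_cost _ a b) ?_
    exact iInf₂_le (f := fun (k : ℕ) (_ : edgeAt n k a b ∨ edgeAt n k b a) =>
      ENNReal.ofReal ((1 / 2 + ε) ^ k)) n (Or.inl hedge')
  -- put everything together
  have hde_st : dist (f (src n)) (f (tgt n)) = e := hequi _ _ fun hq => hstne (hf hq)
  have hde_ab : dist (f a) (f b) = e := hequi _ _ fun hq => hab (hf hq)
  have hre : r ≤ e := by
    have := (hemb (src n) (tgt n)).1
    rw [hst, hde_st, mul_one] at this
    exact this
  have heK : e ≤ K * (r * dW ε n a b) := by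
    rw [← hde_ab]; exact (hemb a b).2
  have hdw_ab : 0 ≤ dW ε n a b := ENNReal.toReal_nonneg
  have hK : 0 < K := by nlinarith [mul_nonneg hr.le hdw_ab]
  have h4 : r ≤ K * (r * x) := le_trans hre (le_trans heK
    (mul_le_mul_of_nonneg_left (mul_le_mul_of_nonneg_left h3 hr.le) hK.le))
  have h1K : 1 ≤ K * x := by nlinarith [h4, hr]
  rw [zpow_neg, zpow_natCast, ← hxdef, ← one_div]
  exact (div_le_iff₀ hx).mpr h1K


end Stmt
end
end

section
/- For every m ≥ 1, the unit sphere of every m-dimensional real Banach space contains 2·4^{m−1} points with pairwise distances at least 1/16. -/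
noncomputable section

namespace Stmt

universe u

open Metric Set MeasureTheory
open scoped ENNReal

lemma proj_sep {X : Type*} [NormedAddCommGroup X] [NormedSpace ℝ X] {x y : X}
    (hx1 : 15/16 ≤ ‖x‖) (hx2 : ‖x‖ ≤ 1) (hy1 : 15/16 ≤ ‖y‖) (hy2 : ‖y‖ ≤ 1)
    (hxy : 1/8 ≤ ‖x - y‖) : 1/16 ≤ ‖‖x‖⁻¹ • x - ‖y‖⁻¹ • y‖ := by
  have ha : (0:ℝ) < ‖x‖ := by linarith
  have hb : (0:ℝ) < ‖y‖ := by linarith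
  have key : ‖x‖⁻¹ • x - ‖y‖⁻¹ • y = ‖x‖⁻¹ • ((x - y) + (1 - ‖x‖/‖y‖) • y) := by
    match_scalars <;> field_simp <;> ring
  have hc : ‖(1 - ‖x‖/‖y‖) • y‖ ≤ 1/16 := by
    rw [norm_smul, Real.norm_eq_abs]
    have hb' : |1 - ‖x‖/‖y‖| * ‖y‖ = |‖y‖ - ‖x‖| := by
      rw [← abs_of_pos hb, ← abs_mul]
      congr 1
      field_simp; rw [abs_of_pos hb]; ring
    rw [hb', abs_le]
    constructor <;> linarith
  have hlow : 1/16 ≤ ‖(x - y) + (1 - ‖x‖/‖y‖) • y‖ := by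
    have h1 : ‖x - y‖ ≤ ‖(x - y) + (1 - ‖x‖/‖y‖) • y‖ + ‖(1 - ‖x‖/‖y‖) • y‖ := by
      calc ‖x - y‖ = ‖((x - y) + (1 - ‖x‖/‖y‖) • y) + (-((1 - ‖x‖/‖y‖) • y))‖ := by
            congr 1; abel
      _ ≤ ‖(x - y) + (1 - ‖x‖/‖y‖) • y‖ + ‖-((1 - ‖x‖/‖y‖) • y)‖ := norm_add_le _ _
      _ = ‖(x - y) + (1 - ‖x‖/‖y‖) • y‖ + ‖(1 - ‖x‖/‖y‖) • y‖ := by rw [norm_neg]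
    linarith
  rw [key, norm_smul, Real.norm_eq_abs, abs_of_pos (inv_pos.mpr ha)]
  have hinv : (1:ℝ) ≤ ‖x‖⁻¹ := by
    rw [show (1:ℝ) = 1⁻¹ by norm_num]
    exact inv_anti₀ ha hx2
  nlinarith

lemma keynum (m : ℕ) (hm : 2 ≤ m) :
    (2 * (4:ℝ)^(m-1) - 1) * (1/8)^m + (15/16)^m < 1 := by
  induction m, hm using Nat.le_induction with
  | base => norm_num
  | succ m hm ih =>
    have hme : m - 1 + 1 = m := Nat.sub_add_cancel (by omega)
    have h4 : (4:ℝ)^m = 4^(m-1) * 4 := by rw [← pow_succ, hme]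
    have hsub : m + 1 - 1 = m := by omega
    rw [hsub, pow_succ (1/8 : ℝ), pow_succ (15/16 : ℝ), h4]
    have p1 : (0:ℝ) < (1/8)^m := by positivity
    have p2 : (0:ℝ) < (15/16)^m := by positivity
    have p3 : (1:ℝ) ≤ 4^(m-1) := one_le_pow₀ (by norm_num)
    nlinarith [mul_nonneg (by linarith : (0:ℝ) ≤ (4:ℝ)^(m-1) - 7/8) (le_of_lt p1)]

section Aux
variable {X : Type*} [NormedAddCommGroup X]

lemma exists_max_sep {X : Type*} [NormedAddCommGroup X]
    {A : Set X} (hA : IsCompact A) {d : ℝ} (hd : 0 < d) :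
    ∃ T : Set X, T ⊆ A ∧ T.Finite ∧ T.Pairwise (fun x y => d ≤ dist x y) ∧
      ∀ x ∈ A, ∃ s ∈ T, dist x s ≤ d := by
  set 𝒮 : Set (Set X) := {T | T ⊆ A ∧ T.Pairwise (fun x y => d ≤ dist x y)} with h𝒮
  obtain ⟨T, hTmax⟩ := zorn_subset 𝒮 (by
    intro c hc hchain
    refine ⟨⋃₀ c, ⟨?_, ?_⟩, fun s hs => subset_sUnion_of_mem hs⟩
    · exact sUnion_subset fun t ht => (hc ht).1
    · intro x hx y hy hxy
      obtain ⟨t1, ht1, hx1⟩ := hx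
      obtain ⟨t2, ht2, hy2⟩ := hy
      rcases hchain.total ht1 ht2 with h | h
      · exact (hc ht2).2 (h hx1) hy2 hxy
      · exact (hc ht1).2 hx1 (h hy2) hxy)
  have hTA : T ⊆ A := hTmax.prop.1
  have hTsep : T.Pairwise (fun x y => d ≤ dist x y) := hTmax.prop.2
  -- finiteness
  obtain ⟨t, htfin, htcov⟩ := (totallyBounded_iff.mp hA.totallyBounded) (d / 2) (by linarith)
  have hTfin : T.Finite := by
    have hex : ∀ x : X, ∃ y, x ∈ T → y ∈ t ∧ x ∈ ball y (d / 2) := by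
      intro x
      by_cases hx : x ∈ T
      · have := htcov (hTA hx)
        simp only [mem_iUnion, exists_prop] at this
        obtain ⟨y, hy1, hy2⟩ := this
        exact ⟨y, fun _ => ⟨hy1, hy2⟩⟩
      · exact ⟨x, fun h => absurd h hx⟩
    choose f hf using hex
    apply Set.Finite.of_finite_image (f := f)
    · exact htfin.subset (by rintro y ⟨x, hx, rfl⟩; exact (hf x hx).1)
    · intro x hx y hy hxy
      by_contra hne
      have h1 := (hf x hx).2
      have h2 := (hf y hy).2
      rw [mem_ball] at h1 h2
      have : dist x y < d := by
        calc dist x y ≤ dist x (f x) + dist (f x) y := dist_triangle _ _ _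
        _ = dist x (f x) + dist y (f y) := by rw [hxy, dist_comm (f y) y]
        _ < d/2 + d/2 := add_lt_add h1 h2
        _ = d := by ring
      exact absurd (hTsep hx hy hne) (by linarith)
  refine ⟨T, hTA, hTfin, hTsep, ?_⟩
  intro x hx
  by_contra hcon
  push_neg at hcon
  have hxT : x ∉ T := fun hxT => by
    have := hcon x hxT
    simp at this
    linarith
  have hins : insert x T ∈ 𝒮 := by
    refine ⟨insert_subset hx hTA, ?_⟩
    refine @Set.Pairwise.insert_of_symmetric _ _ _ _ ⟨?_⟩ hTsep ?_
    · intro a b hab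
      rwa [dist_comm]
    · intro b hb _
      exact le_of_lt (hcon b hb)
  have := hTmax.eq_of_subset hins (subset_insert x T)
  exact hxT (this ▸ mem_insert x T)
end Aux

/-- For every `m ≥ 1`, the unit sphere of every `m`-dimensional real
Banach space contains `2 * 4^(m-1)` points with pairwise distances at least `1/16`. -/
theorem statement17 (m : ℕ) (hm : 1 ≤ m)
    (X : Type u) [NormedAddCommGroup X] [NormedSpace ℝ X] [FiniteDimensional ℝ X]
    (hdim : Module.finrank ℝ X = m) :
    ∃ S : Set X, S.ncard = 2 * 4 ^ (m - 1) ∧ (∀ x ∈ S, ‖x‖ = 1) ∧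
      S.Pairwise (fun x y => 1 / 16 ≤ ‖x - y‖) := by
  rcases eq_or_lt_of_le hm with h1 | hm2
  · -- m = 1
    have h1' : m = 1 := h1.symm
    subst h1'
    have : 0 < Module.finrank ℝ X := by rw [hdim]; norm_num
    have : Nontrivial X := Module.nontrivial_of_finrank_pos this
    obtain ⟨x, hx⟩ := exists_norm_eq X (zero_le_one)
    have hx0 : x ≠ 0 := by intro h; rw [h, norm_zero] at hx; norm_num at hx
    have hne : x ≠ -x := by
      intro h
      have h2 : (2:ℝ) • x = 0 := by
        rw [two_smul]
        rw [eq_neg_iff_add_eq_zero] at h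
        exact h
      rcases smul_eq_zero.mp h2 with h' | h'
      · norm_num at h'
      · exact hx0 h'
    have hdist : (1:ℝ)/16 ≤ ‖x - -x‖ := by
      rw [sub_neg_eq_add, ← two_smul ℝ, norm_smul, Real.norm_eq_abs, hx]
      norm_num
    refine ⟨{x, -x}, ?_, ?_, ?_⟩
    · rw [Set.ncard_pair hne]; norm_num
    · rintro y (rfl | rfl)
      · exact hx
      · simpa using hx
    · rintro a (rfl | rfl) b (rfl | rfl) hab
      · exact absurd rfl hab
      · exact hdist
      · rwa [norm_sub_rev] at hdist
      · exact absurd rfl hab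
  · -- m ≥ 2
    have hm2' : 2 ≤ m := hm2
    have hnt : Nontrivial X := Module.nontrivial_of_finrank_pos
      (by rw [hdim]; omega : 0 < Module.finrank ℝ X)
    borelize X
    set μ : Measure X := (Module.finBasis ℝ X).addHaar with hμ
    set V : ℝ≥0∞ := μ (ball 0 1) with hV
    have hV0 : V ≠ 0 := (measure_ball_pos μ 0 one_pos).ne'
    have hVt : V ≠ ⊤ := measure_ball_lt_top.ne
    set A : Set X := closedBall 0 1 \ ball 0 (15/16) with hA
    have hAc : IsCompact A := (isCompact_closedBall (0:X) 1).diff isOpen_ball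
    obtain ⟨T, hTA, hTfin, hTsep, hTcov⟩ := exists_max_sep hAc (show (0:ℝ) < 1/8 by norm_num)
    set N : ℕ := hTfin.toFinset.card with hN
    -- covering
    have hcov : closedBall (0:X) 1 ⊆ (⋃ s ∈ hTfin.toFinset, closedBall s (1/8)) ∪ ball 0 (15/16) := by
      intro z hz
      by_cases h : z ∈ ball (0:X) (15/16)
      · exact Or.inr h
      · obtain ⟨s, hs, hds⟩ := hTcov z ⟨hz, h⟩
        exact Or.inl (Set.mem_biUnion (hTfin.mem_toFinset.mpr hs) (mem_closedBall.mpr hds))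
    -- measure estimate
    have hball : ∀ s : X, μ (closedBall s (1/8)) = ENNReal.ofReal ((1/8:ℝ)^m) * V := by
      intro s
      rw [hV, Measure.addHaar_closedBall μ s (by norm_num : (0:ℝ) ≤ 1/8), hdim]
    have hsmall : μ (ball (0:X) (15/16)) = ENNReal.ofReal ((15/16:ℝ)^m) * V := by
      rw [hV, Measure.addHaar_ball μ 0 (by norm_num : (0:ℝ) ≤ 15/16), hdim]
    have hchain : V ≤ ENNReal.ofReal ((N:ℝ) * (1/8)^m + (15/16)^m) * V := by
      calc V ≤ μ (closedBall 0 1) := measure_mono ball_subset_closedBall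
      _ ≤ μ ((⋃ s ∈ hTfin.toFinset, closedBall s (1/8)) ∪ ball 0 (15/16)) := measure_mono hcov
      _ ≤ μ (⋃ s ∈ hTfin.toFinset, closedBall s (1/8)) + μ (ball 0 (15/16)) := measure_union_le _ _
      _ ≤ (∑ s ∈ hTfin.toFinset, μ (closedBall s (1/8))) + μ (ball 0 (15/16)) := by
            gcongr
            exact measure_biUnion_finset_le _ _
      _ = (N : ℝ≥0∞) * (ENNReal.ofReal ((1/8:ℝ)^m) * V) + ENNReal.ofReal ((15/16:ℝ)^m) * V := by
            rw [hsmall, Finset.sum_congr rfl (fun s _ => hball s), Finset.sum_const, hN,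
              nsmul_eq_mul]
      _ = ENNReal.ofReal ((N:ℝ) * (1/8)^m + (15/16)^m) * V := by
            rw [ENNReal.ofReal_add (by positivity) (by positivity), ENNReal.ofReal_mul
              (by positivity), add_mul, ENNReal.ofReal_natCast, mul_assoc]
    have hge1 : 1 ≤ (N:ℝ) * (1/8)^m + (15/16)^m := by
      have hch := hchain
      conv_lhs at hch => rw [← one_mul V]
      exact ENNReal.one_le_ofReal.mp ((ENNReal.mul_le_mul_iff_left hV0 hVt).mp hch)
    -- cardinality lower bound
    have hNcard : 2 * 4 ^ (m-1) ≤ N := by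
      by_contra hcon
      push_neg at hcon
      have hNr : (N:ℝ) ≤ 2 * (4:ℝ)^(m-1) - 1 := by
        have : (N:ℝ) + 1 ≤ ((2 * 4 ^ (m-1) : ℕ) : ℝ) := by exact_mod_cast hcon
        push_cast at this
        linarith
      have hk := keynum m hm2'
      have hp8 : (0:ℝ) ≤ (1/8)^m := by positivity
      nlinarith
    obtain ⟨T', hT'T, hT'card⟩ := Set.exists_subset_card_eq
      (show 2 * 4 ^ (m-1) ≤ T.ncard by rwa [Set.ncard_eq_toFinset_card T hTfin])
    -- properties of T'
    have hT'A : T' ⊆ A := hT'T.trans hTA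
    have hnorm : ∀ z ∈ T', 15/16 ≤ ‖z‖ ∧ ‖z‖ ≤ 1 := by
      intro z hz
      obtain ⟨h1, h2⟩ := hT'A hz
      rw [mem_closedBall, dist_zero_right] at h1
      rw [mem_ball, dist_zero_right, not_lt] at h2
      exact ⟨h2, h1⟩
    have hT'sep : T'.Pairwise (fun x y => 1/8 ≤ ‖x - y‖) := by
      intro a ha b hb hab
      have h' : 1/8 ≤ dist a b := hTsep (hT'T ha) (hT'T hb) hab
      rwa [dist_eq_norm] at h'
    set φ : X → X := fun z => ‖z‖⁻¹ • z with hφ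
    have hsep : ∀ a ∈ T', ∀ b ∈ T', a ≠ b → 1/16 ≤ ‖φ a - φ b‖ := by
      intro a ha b hb hab
      obtain ⟨ha1, ha2⟩ := hnorm a ha
      obtain ⟨hb1, hb2⟩ := hnorm b hb
      exact proj_sep ha1 ha2 hb1 hb2 (hT'sep ha hb hab)
    have hinj : Set.InjOn φ T' := by
      intro a ha b hb hab
      by_contra hne
      have := hsep a ha b hb hne
      rw [hab, sub_self, norm_zero] at this
      norm_num at this
    refine ⟨φ '' T', ?_, ?_, ?_⟩
    · rw [Set.ncard_image_of_injOn hinj, hT'card]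
    · rintro _ ⟨z, hz, rfl⟩
      obtain ⟨h1, _⟩ := hnorm z hz
      have hz0 : ‖z‖ ≠ 0 := by positivity
      rw [hφ]
      simp only [norm_smul, Real.norm_eq_abs, abs_of_pos (by positivity : (0:ℝ) < ‖z‖⁻¹)]
      exact inv_mul_cancel₀ hz0
    · rintro _ ⟨a, ha, rfl⟩ _ ⟨b, hb, rfl⟩ hne
      have hab : a ≠ b := fun h => hne (by rw [h])
      exact hsep a ha b hb hab


end Stmt
end
end

section
/- For every K ≥ 2 and every n ∈ ℕ, every equilateral metric space of size at most (K/2)^n admits an embedding with distortion at most K into an arbitrary n-dimensional real Banach space. -/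
noncomputable section

namespace Stmt

universe u v

open Metric MeasureTheory Module
open scoped ENNReal NNReal

/-- Packing lemma: in a finite-dimensional normed space, if `k ≤ R ^ finrank`, then the closed
ball of radius `R` contains `k` points that are pairwise at distance at least `1`. -/
lemma pack (X : Type*) [NormedAddCommGroup X] [NormedSpace ℝ X] [FiniteDimensional ℝ X]
    (R : ℝ) (hR : 1 ≤ R) (k : ℕ) (hk : (k : ℝ) ≤ R ^ (finrank ℝ X)) :
    ∃ S : Finset X, S.card = k ∧ (∀ x ∈ S, ‖x‖ ≤ R) ∧
      ∀ x ∈ S, ∀ y ∈ S, x ≠ y → 1 ≤ ‖x - y‖ := by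
  classical
  borelize X
  induction k with
  | zero => exact ⟨∅, by simp⟩
  | succ k ih =>
    obtain ⟨S, hScard, hSnorm, hSsep⟩ := ih (le_trans (by exact_mod_cast Nat.le_succ k) hk)
    set μ := (finBasis ℝ X).addHaar
    have hμpos : 0 < μ (closedBall (0:X) 1) := measure_closedBall_pos μ _ one_pos
    have hμtop : μ (closedBall (0:X) 1) ≠ ⊤ := measure_closedBall_lt_top.ne
    have hlt : μ (⋃ s ∈ S, closedBall s 1) < μ (closedBall (0:X) R) := by
      calc μ (⋃ s ∈ S, closedBall s 1) ≤ ∑ s ∈ S, μ (closedBall s 1) :=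
            measure_biUnion_finset_le S _
        _ = (k : ℝ≥0∞) * μ (closedBall (0:X) 1) := by
            rw [Finset.sum_congr rfl (fun s _ => μ.addHaar_closedBall' s zero_le_one)]
            simp [hScard, Finset.sum_const, mul_comm, one_pow]
        _ < ENNReal.ofReal (R ^ finrank ℝ X) * μ (closedBall (0:X) 1) := by
            refine ENNReal.mul_lt_mul_left hμpos.ne' hμtop ?_
            rw [show ((k:ℕ) : ℝ≥0∞) = ENNReal.ofReal (k:ℝ) by simp]
            exact ENNReal.ofReal_lt_ofReal_iff_of_nonneg (by positivity) |>.mpr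
              (lt_of_lt_of_le (by exact_mod_cast Nat.lt_succ_self k) hk)
        _ = μ (closedBall (0:X) R) := (μ.addHaar_closedBall' 0 (by linarith)).symm
    have hnc : ¬ closedBall (0:X) R ⊆ ⋃ s ∈ S, closedBall s 1 := fun h =>
      absurd (measure_mono h) (not_le.mpr hlt)
    obtain ⟨x, hxR, hxS⟩ := Set.not_subset.mp hnc
    have hxsep : ∀ s ∈ S, 1 < ‖x - s‖ := by
      intro s hs
      by_contra h
      exact hxS (Set.mem_biUnion hs (by simpa [dist_eq_norm] using not_lt.mp h))
    have hxnot : x ∉ S := fun h => by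
      have := hxsep x h; simp only [sub_self, norm_zero] at this; linarith
    refine ⟨insert x S, by rw [Finset.card_insert_of_notMem hxnot, hScard], ?_, ?_⟩
    · intro y hy
      rcases Finset.mem_insert.mp hy with rfl | hy
      · simpa using hxR
      · exact hSnorm y hy
    · intro a ha b hb hab
      rcases Finset.mem_insert.mp ha with rfl | ha' <;>
        rcases Finset.mem_insert.mp hb with rfl | hb'
      · exact absurd rfl hab
      · exact (hxsep b hb').le
      · rw [show a - b = -(b - a) by abel, norm_neg]; exact (hxsep a ha').le
      · exact hSsep a ha' b hb' hab

/-- For every `K ≥ 2` and every `n`, every equilateral metric space of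
size at most `(K/2)^n` admits an embedding with distortion at most `K` into an arbitrary
`n`-dimensional real Banach space. -/
theorem statement19 (K : ℝ) (hK : 2 ≤ K) (n : ℕ)
    (M : Type v) [MetricSpace M] [Fintype M]
    (e : ℝ) (he : 0 < e) (hequi : ∀ x y : M, x ≠ y → dist x y = e)
    (hcard : (Fintype.card M : ℝ) ≤ (K / 2) ^ n)
    (X : Type u) [NormedAddCommGroup X] [NormedSpace ℝ X] [FiniteDimensional ℝ X]
    (hdim : Module.finrank ℝ X = n) :
    embedsM K (fun a b : M => dist a b) (fun a b : X => ‖a - b‖) := by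
  have hK2 : (1 : ℝ) ≤ K / 2 := by linarith
  obtain ⟨S, hScard, hSnorm, hSsep⟩ := pack X (K / 2) hK2 (Fintype.card M)
    (by rw [hdim]; exact hcard)
  have hcardS : Fintype.card S = Fintype.card M := by
    rw [Fintype.card_coe, hScard]
  let g : M ≃ S := (Fintype.equivOfCardEq hcardS).symm
  refine ⟨fun m => (g m : X), ?_, 1 / e, by positivity, ?_⟩
  · intro a b hab
    exact g.injective (Subtype.ext hab)
  · intro a b
    rcases eq_or_ne a b with rfl | hab
    · simp [he.le]
    · have hd : dist a b = e := hequi a b hab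
      have hne : (g a : X) ≠ (g b : X) := fun h => hab (g.injective (Subtype.ext h))
      have h1 : 1 ≤ ‖(g a : X) - (g b : X)‖ :=
        hSsep _ (g a).2 _ (g b).2 hne
      have h2 : ‖(g a : X) - (g b : X)‖ ≤ K := by
        calc ‖(g a : X) - (g b : X)‖ ≤ ‖(g a : X)‖ + ‖(g b : X)‖ := norm_sub_le _ _
          _ ≤ K / 2 + K / 2 := add_le_add (hSnorm _ (g a).2) (hSnorm _ (g b).2)
          _ = K := by ring
      simp only []
      rw [hd]
      constructor
      · rw [one_div, inv_mul_cancel₀ he.ne']; exact h1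
      · rw [one_div, inv_mul_cancel₀ he.ne', mul_one]; exact h2

end Stmt
end
end
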